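/- arXiv:1912.08744 — 2 statements merged into one kernel-verified Lean document; each statement's English description precedes it below -/
import Mathlib

section
/- Classical Buckingham Π-theorem, rank-deficient case: Let A be a real m×n matrix with columns α₁ᵀ,…,αₙᵀ, r := rank(A) < n, k := n−r. Let β ∈ ℝ^m, y ∈ ℝⁿ with Ayᵀ = βᵀ, and F ∈ S(A,β). Fix a basis (x₁ᵀ,…,x_kᵀ) of ker(A), let X be the k×n matrix with rows x₁,…,x_k, define πₛ(u) := u^{xₛ}, ψ(w) := exp(X†·log(w)ᵀ), and G(w) := F(ψ(w))/ψ(w)^y. Then F(v) = G(π₁(v),…,π_k(v))·v^y for every v ∈ (ℝ_{>0})ⁿ. -/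
open Matrix

/-- `v^y := ∏ i, v i ^ y i` (real powers). -/
noncomputable def ppow {ι : Type*} [Fintype ι] (v y : ι → ℝ) : ℝ := ∏ i, v i ^ y i

/-- The scaled vector `(v₁c^{α₁}, …, vₙc^{αₙ})`, where `αⱼᵀ` are the columns of `A`
and `c^α := ∏ i, c i ^ α i`. -/
noncomputable def scale {m n : ℕ} (A : Matrix (Fin m) (Fin n) ℝ) (c : Fin m → ℝ)
    (v : Fin n → ℝ) : Fin n → ℝ := fun j => v j * ppow c (fun i => A i j)

/-- `F ∈ S(A,β,ε)`: `|F(v₁c^{α₁},…,vₙc^{αₙ}) − F(v)c^β| ≤ ε|F(v)|c^β` for all positive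
`v ∈ ℝⁿ`, `c ∈ ℝ^m`. `S(A,β) := S(A,β,0)`. -/
def memS {m n : ℕ} (A : Matrix (Fin m) (Fin n) ℝ) (β : Fin m → ℝ) (ε : ℝ)
    (F : (Fin n → ℝ) → ℝ) : Prop :=
  ∀ v : Fin n → ℝ, (∀ j, 0 < v j) → ∀ c : Fin m → ℝ, (∀ i, 0 < c i) →
    |F (scale A c v) - F v * ppow c β| ≤ ε * |F v| * ppow c β

lemma ppow_exp {n : ℕ} (a y : Fin n → ℝ) :
    ppow (fun i => Real.exp (a i)) y = Real.exp (∑ i, a i * y i) := by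
  unfold ppow
  rw [Real.exp_sum]
  exact Finset.prod_congr rfl fun i _ => by
    rw [Real.rpow_def_of_pos (Real.exp_pos _), Real.log_exp]

lemma ppow_pos {n : ℕ} {v : Fin n → ℝ} (hv : ∀ j, 0 < v j) (y : Fin n → ℝ) :
    0 < ppow v y :=
  Finset.prod_pos fun i _ => Real.rpow_pos_of_pos (hv i) _

/-- Classical Buckingham Π-theorem, rank-deficient case: if `rank A = r < n`,
`k = n−r`, the rows of `X` form a basis of `ker A`, `Xd` is the Moore–Penrose
pseudoinverse of `X`, `Ayᵀ = βᵀ`, `F ∈ S(A,β)`, `πₛ(u) := u^{xₛ}`,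
`ψ(w) := exp(Xd·log(w)ᵀ)` and `G(w) := F(ψ(w))/ψ(w)^y`, then
`F(v) = G(π₁(v),…,π_k(v))·v^y` for every positive `v`. -/
theorem buckingham_rank_deficient (m n r k : ℕ) (A : Matrix (Fin m) (Fin n) ℝ)
    (hr : A.rank = r) (hrn : r < n) (hk : k = n - r)
    (β : Fin m → ℝ) (y : Fin n → ℝ) (hy : A.mulVec y = β)
    (F : (Fin n → ℝ) → ℝ)
    (hF : ∀ v : Fin n → ℝ, (∀ j, 0 < v j) → ∀ c : Fin m → ℝ, (∀ i, 0 < c i) →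
      F (scale A c v) = F v * ppow c β)
    (X : Matrix (Fin k) (Fin n) ℝ)
    (hXker : ∀ s, A.mulVec (X s) = 0)
    (hXind : LinearIndependent ℝ (fun s => X s))
    (Xd : Matrix (Fin n) (Fin k) ℝ)
    (h1 : X * Xd * X = X) (h2 : Xd * X * Xd = Xd)
    (h3 : (X * Xd)ᵀ = X * Xd) (h4 : (Xd * X)ᵀ = Xd * X)
    (ψ : (Fin k → ℝ) → (Fin n → ℝ))
    (hψ : ∀ w, ψ w = fun j => Real.exp (∑ t, Xd j t * Real.log (w t)))
    (G : (Fin k → ℝ) → ℝ) (hG : ∀ w, G w = F (ψ w) / ppow (ψ w) y) :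
    ∀ v : Fin n → ℝ, (∀ j, 0 < v j) →
      F v = G (fun s => ppow v (X s)) * ppow v y := by
  classical
  intro v hv
  set L : Fin n → ℝ := fun j => Real.log (v j) with hL
  set P : Matrix (Fin n) (Fin n) ℝ := Xd * X with hP
  -- basic matrix identities
  have hAXt : A * Xᵀ = 0 := by
    ext i s
    have := congrFun (hXker s) i
    simpa [Matrix.mul_apply, Matrix.mulVec, dotProduct] using this
  have hXAt : X * Aᵀ = 0 := by
    have := congrArg Matrix.transpose hAXt
    simpa [Matrix.transpose_mul] using this
  have hPA : P * Aᵀ = 0 := by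
    rw [hP, Matrix.mul_assoc, hXAt, Matrix.mul_zero]
  have hPP : P * P = P := by
    rw [hP]
    calc Xd * X * (Xd * X) = Xd * X * Xd * X := by rw [Matrix.mul_assoc (Xd * X) Xd X]
    _ = Xd * X := by rw [h2]
  have hXP : X * P = X := by
    rw [hP, ← Matrix.mul_assoc, h1]
  have hPXt : P * Xᵀ = Xᵀ := by
    calc P * Xᵀ = Pᵀ * Xᵀ := by rw [h4]
    _ = (X * P)ᵀ := (Matrix.transpose_mul X P).symm
    _ = Xᵀ := by rw [hXP]
  -- rank computations
  have hrX : X.rank = k := by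
    have := hXind.rank_matrix
    simpa using this
  have hrXt : Xᵀ.rank = k := by rw [Matrix.rank_transpose, hrX]
  have hrP : P.rank = k := by
    refine le_antisymm ?_ ?_
    · calc P.rank ≤ X.rank := Matrix.rank_mul_le_right Xd X
      _ = k := hrX
    · calc k = Xᵀ.rank := hrXt.symm
      _ = (P * Xᵀ).rank := by rw [hPXt]
      _ ≤ P.rank := Matrix.rank_mul_le_left P Xᵀ
  have hkn : k ≤ n := by omega
  -- kernel of P equals range of Aᵀ
  have hle : LinearMap.range Aᵀ.mulVecLin ≤ LinearMap.ker P.mulVecLin := by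
    rintro x ⟨z, rfl⟩
    simp only [LinearMap.mem_ker, Matrix.mulVecLin_apply, Matrix.mulVec_mulVec, hPA,
      Matrix.zero_mulVec]
  have hfinker : Module.finrank ℝ (LinearMap.ker P.mulVecLin) = r := by
    have hrn' := LinearMap.finrank_range_add_finrank_ker P.mulVecLin
    have hfr : Module.finrank ℝ (LinearMap.range P.mulVecLin) = k := hrP
    rw [hfr, Module.finrank_pi] at hrn'
    simp only [Fintype.card_fin] at hrn'
    omega
  have hfinrange : Module.finrank ℝ (LinearMap.range Aᵀ.mulVecLin) = r := by
    have : Aᵀ.rank = r := by rw [Matrix.rank_transpose, hr]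
    exact this
  have hker : LinearMap.ker P.mulVecLin = LinearMap.range Aᵀ.mulVecLin := by
    refine (Submodule.eq_of_le_of_finrank_le hle ?_).symm
    rw [hfinker, hfinrange]
  -- u := L - P L is in ker P, hence in range Aᵀ
  have hu : (L - P.mulVec L) ∈ LinearMap.ker P.mulVecLin := by
    simp only [LinearMap.mem_ker, Matrix.mulVecLin_apply]
    rw [Matrix.mulVec_sub, Matrix.mulVec_mulVec, hPP, sub_self]
  rw [hker] at hu
  obtain ⟨z, hz⟩ := hu
  simp only [Matrix.mulVecLin_apply] at hz
  set c : Fin m → ℝ := fun i => Real.exp (z i) with hc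
  have hcpos : ∀ i, 0 < c i := fun i => Real.exp_pos _
  set w : Fin k → ℝ := fun s => ppow v (X s) with hw
  -- log of w
  have hlogw : ∀ s, Real.log (w s) = X.mulVec L s := by
    intro s
    rw [hw]
    unfold ppow
    rw [Real.log_prod (fun j _ => (Real.rpow_pos_of_pos (hv j) _).ne')]
    simp only [Matrix.mulVec, dotProduct]
    exact Finset.sum_congr rfl fun j _ => by rw [Real.log_rpow (hv j)]
  -- ψ w in terms of P
  have hψw : ψ w = fun j => Real.exp (P.mulVec L j) := by
    rw [hψ]
    funext j
    congr 1
    have : (∑ t, Xd j t * Real.log (w t)) = Xd.mulVec (X.mulVec L) j := by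
      simp only [Matrix.mulVec, dotProduct]
      exact Finset.sum_congr rfl fun t _ => by rw [hlogw t]; rfl
    rw [this, Matrix.mulVec_mulVec, hP]
  have hψpos : ∀ j, 0 < ψ w j := by
    intro j; rw [hψw]; exact Real.exp_pos _
  -- scale A c (ψ w) = v
  have hAz : ∀ j, ∑ i, z i * A i j = L j - P.mulVec L j := by
    intro j
    have := congrFun hz j
    simp only [Matrix.mulVec, dotProduct, Matrix.transpose_apply, Pi.sub_apply] at this
    have hgoal : (P *ᵥ L) j = ∑ x, P j x * L x := rfl
    rw [hgoal, ← this]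
    exact Finset.sum_congr rfl fun i _ => by ring
  have hscale : scale A c (ψ w) = v := by
    funext j
    unfold scale
    rw [hψw]
    have : ppow c (fun i => A i j) = Real.exp (∑ i, z i * A i j) := ppow_exp z _
    rw [this, hAz j, ← Real.exp_add]
    simp only [add_sub_cancel]
    exact Real.exp_log (hv j)
  have hFv : F v = F (ψ w) * ppow c β := by
    rw [← hscale]
    exact hF (ψ w) hψpos c hcpos
  -- ppow computations
  have hvexp : v = fun j => Real.exp (L j) := by
    funext j; rw [hL]; exact (Real.exp_log (hv j)).symm
  have hppv : ppow v y = Real.exp (∑ j, L j * y j) := by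
    conv_lhs => rw [hvexp]
    exact ppow_exp L y
  have hppψ : ppow (ψ w) y = Real.exp (∑ j, P.mulVec L j * y j) := by
    rw [hψw]; exact ppow_exp _ y
  have hppc : ppow c β = Real.exp (∑ i, z i * β i) := ppow_exp z β
  -- the key scalar identity
  have hsum : (∑ j, L j * y j) - (∑ j, P.mulVec L j * y j) = ∑ i, z i * β i := by
    rw [← Finset.sum_sub_distrib]
    have step1 : ∀ j, L j * y j - P.mulVec L j * y j = (∑ i, z i * A i j) * y j := by
      intro j; rw [hAz j]; ring
    calc (∑ j, (L j * y j - P.mulVec L j * y j))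
        = ∑ j, (∑ i, z i * A i j) * y j := Finset.sum_congr rfl fun j _ => step1 j
      _ = ∑ j, ∑ i, z i * A i j * y j := by
          exact Finset.sum_congr rfl fun j _ => Finset.sum_mul _ _ _
      _ = ∑ i, ∑ j, z i * A i j * y j := Finset.sum_comm
      _ = ∑ i, z i * (A.mulVec y) i := by
          refine Finset.sum_congr rfl fun i _ => ?_
          simp only [Matrix.mulVec, dotProduct, Finset.mul_sum]
          exact Finset.sum_congr rfl fun j _ => by ring
      _ = ∑ i, z i * β i := by rw [hy]
  -- conclude
  rw [hG, hFv, hppv, hppψ, hppc]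
  rw [div_mul_eq_mul_div, eq_div_iff (Real.exp_ne_zero _)]
  rw [mul_assoc, ← Real.exp_add]
  congr 2
  linarith [hsum]
end

section
/- For every nonzero real m×n matrix A, every ε > 0, and every β ∈ ℝ^m with βᵀ in the range of A, the set S(A,β) is a proper subset of S(A,β,ε). -/
open Matrix

/-- The scaled vector `(v₁c^{α₁}, …, vₙc^{αₙ})`, where `αⱼᵀ` are the columns of `A`
and `c^α := ∏ i, c i ^ α i`. -/
lemma ppow_pos_s18 {ι : Type*} [Fintype ι] {v : ι → ℝ} (hv : ∀ i, 0 < v i) (y : ι → ℝ) :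
    0 < ppow v y :=
  Finset.prod_pos fun i _ => Real.rpow_pos_of_pos (hv i) _

lemma ppow_one' {ι : Type*} [Fintype ι] (y : ι → ℝ) : ppow (fun _ => (1:ℝ)) y = 1 := by
  simp [ppow]

/-- `F ∈ S(A,β,ε)`: `|F(v₁c^{α₁},…,vₙc^{αₙ}) − F(v)c^β| ≤ ε|F(v)|c^β` for all positive
`v ∈ ℝⁿ`, `c ∈ ℝ^m`. `S(A,β) := S(A,β,0)`. -/
lemma ppow_scale {m n : ℕ} (A : Matrix (Fin m) (Fin n) ℝ) {c : Fin m → ℝ}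
    {v : Fin n → ℝ} (hc : ∀ i, 0 < c i) (hv : ∀ j, 0 < v j) (y : Fin n → ℝ) :
    ppow (scale A c v) y = ppow v y * ppow c (A.mulVec y) := by
  unfold ppow scale
  have h1 : ∀ j, (v j * ppow c (fun i => A i j)) ^ y j
      = v j ^ y j * ∏ i, c i ^ (A i j * y j) := by
    intro j
    rw [Real.mul_rpow (hv j).le (ppow_pos_s18 hc _).le]
    congr 1
    unfold ppow
    rw [← Real.finset_prod_rpow _ _ (fun i _ => (Real.rpow_pos_of_pos (hc i) _).le)]
    exact Finset.prod_congr rfl fun i _ => (Real.rpow_mul (hc i).le _ _).symm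
  simp only [h1]
  rw [Finset.prod_mul_distrib]
  congr 1
  rw [Finset.prod_comm]
  refine Finset.prod_congr rfl fun i _ => ?_
  rw [Matrix.mulVec, dotProduct, ← Real.rpow_sum_of_pos (hc i)]

/-- The set `S(A,β,ε)` as a set of functions on `ℝⁿ` (restricted to positive vectors). -/
def SFun {m n : ℕ} (A : Matrix (Fin m) (Fin n) ℝ) (β : Fin m → ℝ) (ε : ℝ) :
    Set ((Fin n → ℝ) → ℝ) := {F | memS A β ε F}

/-- For every nonzero `A`, every `ε > 0`, and every `β` with `βᵀ` in the range of
`A`, `S(A,β)` is a proper subset of `S(A,β,ε)`. -/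
theorem S_proper_subset (m n : ℕ) (A : Matrix (Fin m) (Fin n) ℝ) (hA : A ≠ 0)
    (ε : ℝ) (hε : 0 < ε) (β : Fin m → ℝ) (hβ : ∃ y : Fin n → ℝ, A.mulVec y = β) :
    SFun A β 0 ⊂ SFun A β ε := by
  obtain ⟨y, hy⟩ := hβ
  constructor
  · intro F hF v hv c hc
    have h := hF v hv c hc
    have h0 : ε * |F v| * ppow c β ≥ 0 :=
      mul_nonneg (mul_nonneg hε.le (abs_nonneg _)) (ppow_pos_s18 hc _).le
    calc |F (scale A c v) - F v * ppow c β| ≤ 0 * |F v| * ppow c β := h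
    _ = 0 := by ring
    _ ≤ _ := h0
  · -- strictness: exhibit F ∈ S(A,β,ε) \ S(A,β,0)
    intro hsub
    set τ : ℝ := ε / (2 + ε) with hτdef
    have hτ0 : 0 < τ := div_pos hε (by linarith)
    have hτ1 : τ < 1 := by
      rw [hτdef, div_lt_one (by linarith)]; linarith
    set H : (Fin n → ℝ) → ℝ := fun v => if v = fun _ => 1 then 1 - τ else 1 + τ with hH
    have hHpos : ∀ v, 0 < H v := by
      intro v; rw [hH]; dsimp only; split <;> linarith
    have hHlb : ∀ v, 1 - τ ≤ H v := by
      intro v; rw [hH]; dsimp only; split <;> linarith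
    have hHub : ∀ v, H v ≤ 1 + τ := by
      intro v; rw [hH]; dsimp only; split <;> linarith
    set F : (Fin n → ℝ) → ℝ := fun v => H v * ppow v y with hF
    have hmem : F ∈ SFun A β ε := by
      intro v hv c hc
      have hsc : ppow (scale A c v) y = ppow v y * ppow c β := by
        rw [ppow_scale A hc hv, hy]
      have hpv : 0 < ppow v y := ppow_pos_s18 hv y
      have hpc : 0 < ppow c β := ppow_pos_s18 hc β
      have key : F (scale A c v) - F v * ppow c β
          = (H (scale A c v) - H v) * (ppow v y * ppow c β) := by
        rw [hF]; dsimp only; rw [hsc]; ring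
      rw [key, abs_mul, abs_of_pos (mul_pos hpv hpc)]
      have habs : |H (scale A c v) - H v| ≤ 2 * τ := by
        rw [abs_le]
        constructor <;> nlinarith [hHlb (scale A c v), hHub (scale A c v), hHlb v, hHub v]
      have hFv : |F v| = H v * ppow v y := by
        rw [hF]; dsimp only; rw [abs_of_pos (mul_pos (hHpos v) hpv)]
      rw [hFv]
      have h2τ : 2 * τ ≤ ε * (1 - τ) := by
        have h2 : (0:ℝ) < 2 + ε := by linarith
        apply le_of_eq
        rw [hτdef]
        field_simp
        ring
      calc |H (scale A c v) - H v| * (ppow v y * ppow c β)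
          ≤ (2 * τ) * (ppow v y * ppow c β) := by
            apply mul_le_mul_of_nonneg_right habs (by positivity)
        _ ≤ (ε * (1 - τ)) * (ppow v y * ppow c β) := by
            apply mul_le_mul_of_nonneg_right h2τ (by positivity)
        _ ≤ (ε * H v) * (ppow v y * ppow c β) := by
            apply mul_le_mul_of_nonneg_right _ (by positivity)
            exact mul_le_mul_of_nonneg_left (hHlb v) hε.le
        _ = ε * (H v * ppow v y) * ppow c β := by ring
    have hnot : F ∉ SFun A β 0 := by
      intro hF0
      -- find a nonzero entry
      have : ∃ i j, A i j ≠ 0 := by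
        by_contra hcon
        push_neg at hcon
        exact hA (by ext i j; simpa using hcon i j)
      obtain ⟨i0, j0, hij⟩ := this
      set c : Fin m → ℝ := fun i => if i = i0 then Real.exp 1 else 1 with hc
      have hcpos : ∀ i, 0 < c i := by
        intro i; rw [hc]; dsimp only; split
        · exact Real.exp_pos 1
        · exact one_pos
      have hscale1 : scale A c (fun _ => 1) j0 ≠ 1 := by
        unfold scale ppow
        rw [one_mul]
        have : ∀ i, c i ^ A i j0 = if i = i0 then Real.exp (A i j0) else 1 := by
          intro i; rw [hc]; dsimp only; split
          · exact Real.exp_one_rpow _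
          · exact Real.one_rpow _
        simp only [this]
        rw [Finset.prod_ite_eq' Finset.univ i0 (fun i => Real.exp (A i j0))]
        simp only [Finset.mem_univ, if_true]
        intro heq
        exact hij (Real.exp_injective (by rw [heq, Real.exp_zero]))
      have hne : scale A c (fun _ => 1) ≠ fun _ => 1 := by
        intro heq
        exact hscale1 (congrFun heq j0)
      have hone : ∀ j : Fin n, (0:ℝ) < (fun _ => (1:ℝ)) j := fun _ => one_pos
      have h := hF0 (fun _ => 1) hone c hcpos
      have hsc : ppow (scale A c (fun _ => 1)) y = ppow c β := by
        rw [ppow_scale A hcpos hone, hy, ppow_one', one_mul]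
      have hval : F (scale A c (fun _ => 1)) - F (fun _ => 1) * ppow c β
          = 2 * τ * ppow c β := by
        rw [hF, hH]
        dsimp only
        rw [if_neg hne, if_pos rfl, hsc, ppow_one']
        ring
      rw [hval] at h
      have hpc : 0 < ppow c β := ppow_pos_s18 hcpos β
      rw [abs_of_pos (by positivity)] at h
      nlinarith [abs_nonneg (F (fun _ => 1))]
    exact hnot (hsub hmem)
end
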